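/- Let H = 2P_1+P_4 (two isolated vertices together with a path on four vertices). For every black-and-white labelling ℓ of H, the bipartite complement of H with respect to ℓ contains an induced subgraph isomorphic to the cycle C_4; in particular, this bipartite complement does not belong to the class S. -/

import Mathlib

open SimpleGraph

/-- `B` is the black colour class of a black-and-white labelling of `H`:
every edge of `H` joins a vertex of `B` to a vertex outside `B`
(equivalently, `B` and its complement `Bᶜ` are both independent sets,
i.e. `(B, Bᶜ)` is a bipartition of `H` into two possibly empty independent sets). -/
def IsBWLabelling {V : Type*} (H : SimpleGraph V) (B : Set V) : Prop :=
  ∀ ⦃u v : V⦄, H.Adj u v → (u ∈ B ↔ v ∉ B)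

/-- `H` with black class `BH` is a labelled induced subgraph of `G` with black class `BG`:
there is an injective map preserving both adjacency and non-adjacency which maps
black vertices to black vertices and white vertices to white vertices. -/
def LabelledIndSubgraph {VH VG : Type*} (H : SimpleGraph VH) (BH : Set VH)
    (G : SimpleGraph VG) (BG : Set VG) : Prop :=
  ∃ f : VH → VG, Function.Injective f ∧
    (∀ u v : VH, H.Adj u v ↔ G.Adj (f u) (f v)) ∧
    (∀ u : VH, u ∈ BH ↔ f u ∈ BG)

/-- `G` is strongly `H^ℓ`-free, where `BH` is the black class of the labelling `ℓ`:
there is no bipartition `(BG, BGᶜ)` of `G` such that `H^ℓ` is a labelled induced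
subgraph of `(BG, BGᶜ, E_G)`. -/
def StronglyFree {VG VH : Type*} (G : SimpleGraph VG) (H : SimpleGraph VH)
    (BH : Set VH) : Prop :=
  ¬ ∃ BG : Set VG, IsBWLabelling G BG ∧ LabelledIndSubgraph H BH G BG

/-- `G` is weakly `H^ℓ`-free, where `BH` is the black class of the labelling `ℓ`:
it is not the case that `H^ℓ` is a labelled induced subgraph of `(BG, BGᶜ, E_G)`
for every bipartition `(BG, BGᶜ)` of `G`. -/
def WeaklyFree {VG VH : Type*} (G : SimpleGraph VG) (H : SimpleGraph VH)
    (BH : Set VH) : Prop :=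
  ¬ ∀ BG : Set VG, IsBWLabelling G BG → LabelledIndSubgraph H BH G BG

/-- `G` is `H`-free: `G` contains no induced subgraph isomorphic to `H`. -/
def HFree {VG VH : Type*} (G : SimpleGraph VG) (H : SimpleGraph VH) : Prop :=
  ¬ ∃ f : VH → VG, Function.Injective f ∧ ∀ u v : VH, H.Adj u v ↔ G.Adj (f u) (f v)

/-- The bipartite complement of `H` with respect to the black-and-white labelling
with black class `B`: a black vertex and a white vertex are adjacent if and only if
they are non-adjacent in `H`, and no two vertices of the same colour are adjacent. -/
def bipComplement {V : Type*} (H : SimpleGraph V) (B : Set V) : SimpleGraph V :=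
  SimpleGraph.fromRel (fun u v => u ∈ B ∧ v ∉ B ∧ ¬ H.Adj u v)

/-- The subdivided claw `S_{h,i,j}` (for `1 ≤ h ≤ i ≤ j`): the tree with one centre
vertex `0` of degree `3` and three paths attached to it, with leaves at distance
`h`, `i` and `j` from the centre. The vertices of the three paths are
`1, …, h`, `h+1, …, h+i` and `h+i+1, …, h+i+j`, respectively. -/
def subdividedClaw (h i j : ℕ) : SimpleGraph (Fin (h + i + j + 1)) :=
  SimpleGraph.fromRel (fun a b =>
    (a.val = 0 ∧ (b.val = 1 ∨ b.val = h + 1 ∨ b.val = h + i + 1)) ∨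
    (1 ≤ a.val ∧ b.val = a.val + 1 ∧
      (b.val ≤ h ∨ (h + 1 ≤ a.val ∧ b.val ≤ h + i) ∨
        (h + i + 1 ≤ a.val ∧ b.val ≤ h + i + j))))

/-- `H` belongs to the class `S`: every connected component of `H` is isomorphic
to a path `P_r` for some `r ≥ 1` or to a subdivided claw `S_{h,i,j}` for some
`1 ≤ h ≤ i ≤ j`. -/
def InClassS {V : Type*} (H : SimpleGraph V) : Prop :=
  ∀ c : H.ConnectedComponent,
    (∃ r : ℕ, 1 ≤ r ∧ Nonempty ((H.induce c.supp) ≃g SimpleGraph.pathGraph r)) ∨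
    (∃ h i j : ℕ, 1 ≤ h ∧ h ≤ i ∧ i ≤ j ∧
      Nonempty ((H.induce c.supp) ≃g subdividedClaw h i j))

/-- The graph `2P_1 + P_4`: vertices `0, 1` isolated, path `2-3-4-5`. -/
def g2P1'P4 : SimpleGraph (Fin 6) :=
  SimpleGraph.fromEdgeSet {s(2, 3), s(3, 4), s(4, 5)}

lemma aux_c4_embed {V : Type*} (G : SimpleGraph V) (a b c d : V)
    (hab : G.Adj a b) (hbc : G.Adj b c) (hcd : G.Adj c d) (hda : G.Adj d a)
    (hac : ¬ G.Adj a c) (hbd : ¬ G.Adj b d) (hac' : a ≠ c) (hbd' : b ≠ d) :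
    Nonempty (SimpleGraph.cycleGraph 4 ↪g G) := by
  have h1 := hab.ne
  have h2 := hbc.ne
  have h3 := hcd.ne
  have h4 := hda.ne'
  refine ⟨⟨⟨![a, b, c, d], ?_⟩, ?_⟩⟩
  · intro x y hxy
    fin_cases x <;> fin_cases y <;> simp_all
  · intro x y
    fin_cases x <;> fin_cases y <;>
      simp [cycleGraph_adj, Fin.ext_iff, G.loopless.irrefl a, G.loopless.irrefl b, G.loopless.irrefl c,
        G.loopless.irrefl d] <;>
      first
      | exact hab
      | exact hbc
      | exact hcd
      | exact hda
      | exact hab.symm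
      | exact hbc.symm
      | exact hcd.symm
      | exact hda.symm
      | exact iff_of_true hda (by decide)
      | exact iff_of_true hda.symm (by decide)
      | exact hac
      | exact hbd
      | exact (by intro hh; exact hac hh.symm)
      | exact (by intro hh; exact hbd hh.symm)
      | exact iff_of_false hac (by decide)
      | exact iff_of_false hbd (by decide)
      | exact iff_of_false (by intro hh; exact hac hh.symm) (by decide)
      | exact iff_of_false (by intro hh; exact hbd hh.symm) (by decide)

lemma aux_no_c4 {n : ℕ} (G : SimpleGraph (Fin n))
    (h1 : ∀ u w v : Fin n, G.Adj u v → G.Adj w v → u < v → w < v → u = w) :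
    ¬ Nonempty (SimpleGraph.cycleGraph 4 ↪g G) := by
  rintro ⟨e⟩
  have hab : G.Adj (e 0) (e 1) := e.map_rel_iff.mpr (by decide)
  have hbc : G.Adj (e 1) (e 2) := e.map_rel_iff.mpr (by decide)
  have hcd : G.Adj (e 2) (e 3) := e.map_rel_iff.mpr (by decide)
  have hda : G.Adj (e 3) (e 0) := e.map_rel_iff.mpr (by decide)
  have n01 : e 0 ≠ e 1 := e.injective.ne (by decide)
  have n02 : e 0 ≠ e 2 := e.injective.ne (by decide)
  have n03 : e 0 ≠ e 3 := e.injective.ne (by decide)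
  have n12 : e 1 ≠ e 2 := e.injective.ne (by decide)
  have n13 : e 1 ≠ e 3 := e.injective.ne (by decide)
  have n23 : e 2 ≠ e 3 := e.injective.ne (by decide)
  have k0 : ¬ (e 1 < e 0 ∧ e 3 < e 0) := fun ⟨x, y⟩ => n13 (h1 _ _ _ hab.symm hda x y)
  have k1 : ¬ (e 0 < e 1 ∧ e 2 < e 1) := fun ⟨x, y⟩ => n02 (h1 _ _ _ hab hbc.symm x y)
  have k2 : ¬ (e 1 < e 2 ∧ e 3 < e 2) := fun ⟨x, y⟩ => n13 (h1 _ _ _ hbc hcd.symm x y)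
  have k3 : ¬ (e 2 < e 3 ∧ e 0 < e 3) := fun ⟨x, y⟩ => n02 (h1 _ _ _ hda.symm hcd y x)
  simp only [Fin.lt_def] at k0 k1 k2 k3
  have v01 : (e 0).val ≠ (e 1).val := fun h => n01 (Fin.val_injective h)
  have v02 : (e 0).val ≠ (e 2).val := fun h => n02 (Fin.val_injective h)
  have v03 : (e 0).val ≠ (e 3).val := fun h => n03 (Fin.val_injective h)
  have v12 : (e 1).val ≠ (e 2).val := fun h => n12 (Fin.val_injective h)
  have v13 : (e 1).val ≠ (e 3).val := fun h => n13 (Fin.val_injective h)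
  have v23 : (e 2).val ≠ (e 3).val := fun h => n23 (Fin.val_injective h)
  omega

lemma aux_path (r : ℕ) : ∀ u w v : Fin r,
    (pathGraph r).Adj u v → (pathGraph r).Adj w v → u < v → w < v → u = w := by
  intro u w v huv hwv hu hw
  rw [pathGraph_adj] at huv hwv
  rw [Fin.lt_def] at hu hw
  exact Fin.val_injective (by omega)

lemma aux_claw (h i j : ℕ) : ∀ u w v : Fin (h + i + j + 1),
    (subdividedClaw h i j).Adj u v → (subdividedClaw h i j).Adj w v →
      u < v → w < v → u = w := by
  intro u w v huv hwv hu hw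
  simp only [subdividedClaw, SimpleGraph.fromRel_adj] at huv hwv
  rw [Fin.lt_def] at hu hw
  obtain ⟨-, huv⟩ := huv
  obtain ⟨-, hwv⟩ := hwv
  exact Fin.val_injective (by omega)

lemma aux_bip_adj (B : Set (Fin 6)) {u v : Fin 6} (hne : u ≠ v) (hu : u ∈ B)
    (hv : v ∉ B) (hn : ¬ g2P1'P4.Adj u v) : (bipComplement g2P1'P4 B).Adj u v := by
  rw [bipComplement, SimpleGraph.fromRel_adj]
  exact ⟨hne, Or.inl ⟨hu, hv, hn⟩⟩

lemma aux_bip_nonadj_bb (B : Set (Fin 6)) {u v : Fin 6} (hu : u ∈ B) (hv : v ∈ B) :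
    ¬ (bipComplement g2P1'P4 B).Adj u v := by
  rw [bipComplement, SimpleGraph.fromRel_adj]
  rintro ⟨-, ⟨-, h, -⟩ | ⟨-, h, -⟩⟩
  · exact h hv
  · exact h hu

lemma aux_bip_nonadj_ww (B : Set (Fin 6)) {u v : Fin 6} (hu : u ∉ B) (hv : v ∉ B) :
    ¬ (bipComplement g2P1'P4 B).Adj u v := by
  rw [bipComplement, SimpleGraph.fromRel_adj]
  rintro ⟨-, ⟨h, -, -⟩ | ⟨h, -, -⟩⟩
  · exact hu h
  · exact hv h

lemma aux_g_nonadj {u v : Fin 6}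
    (h : ¬ ((u = 2 ∧ v = 3) ∨ (u = 3 ∧ v = 2) ∨ (u = 3 ∧ v = 4) ∨ (u = 4 ∧ v = 3) ∨
      (u = 4 ∧ v = 5) ∨ (u = 5 ∧ v = 4))) : ¬ g2P1'P4.Adj u v := by
  rw [g2P1'P4, SimpleGraph.fromEdgeSet_adj]
  rintro ⟨hm, -⟩
  simp only [Set.mem_insert_iff, Set.mem_singleton_iff, Sym2.eq_iff] at hm
  tauto

lemma aux_not_S {V : Type*} (G : SimpleGraph V)
    (e : SimpleGraph.cycleGraph 4 ↪g G) : ¬ InClassS G := by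
  intro hS
  have hab : G.Adj (e 0) (e 1) := e.map_rel_iff.mpr (by decide)
  have hbc : G.Adj (e 1) (e 2) := e.map_rel_iff.mpr (by decide)
  have hda : G.Adj (e 3) (e 0) := e.map_rel_iff.mpr (by decide)
  set c := G.connectedComponentMk (e 0) with hc
  have hmem : ∀ x : Fin 4, e x ∈ c.supp := by
    intro x
    rw [SimpleGraph.ConnectedComponent.mem_supp_iff]
    apply SimpleGraph.ConnectedComponent.sound
    fin_cases x
    · exact SimpleGraph.Reachable.refl _
    · exact hab.symm.reachable
    · exact (hbc.symm.reachable).trans hab.symm.reachable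
    · exact hda.reachable
  let e' : SimpleGraph.cycleGraph 4 ↪g (G.induce c.supp) :=
    ⟨⟨fun x => ⟨e x, hmem x⟩, fun x y hxy => e.injective (congrArg Subtype.val hxy)⟩,
      by intro x y; exact e.map_rel_iff⟩
  rcases hS c with ⟨r, -, ⟨iso⟩⟩ | ⟨h, i, j, -, -, -, ⟨iso⟩⟩
  · exact aux_no_c4 _ (aux_path r) ⟨iso.toEmbedding.comp e'⟩
  · exact aux_no_c4 _ (aux_claw h i j) ⟨iso.toEmbedding.comp e'⟩

/-- For every black-and-white labelling of `2P_1 + P_4`, the bipartite complement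
of `2P_1 + P_4` with respect to it contains an induced subgraph isomorphic to the
cycle `C_4`; in particular, this bipartite complement does not belong to the
class `S`. -/
theorem stmt_11 (B : Set (Fin 6)) (hB : IsBWLabelling g2P1'P4 B) :
    Nonempty (SimpleGraph.cycleGraph 4 ↪g bipComplement g2P1'P4 B) ∧
    ¬ InClassS (bipComplement g2P1'P4 B) := by
  have a23 : g2P1'P4.Adj 2 3 := by
    rw [g2P1'P4, SimpleGraph.fromEdgeSet_adj]
    exact ⟨by simp, by decide⟩
  have a34 : g2P1'P4.Adj 3 4 := by
    rw [g2P1'P4, SimpleGraph.fromEdgeSet_adj]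
    exact ⟨by simp, by decide⟩
  have a45 : g2P1'P4.Adj 4 5 := by
    rw [g2P1'P4, SimpleGraph.fromEdgeSet_adj]
    exact ⟨by simp, by decide⟩
  have h23 := hB a23
  have h34 := hB a34
  have h45 := hB a45
  have hC4 : Nonempty (SimpleGraph.cycleGraph 4 ↪g bipComplement g2P1'P4 B) := by
    by_cases h2 : (2 : Fin 6) ∈ B
    · have h3 : (3 : Fin 6) ∉ B := h23.mp h2
      have h4 : (4 : Fin 6) ∈ B := by
        by_contra hx
        exact h3 (h34.mpr hx)
      have h5 : (5 : Fin 6) ∉ B := h45.mp h4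
      by_cases h0 : (0 : Fin 6) ∈ B <;> by_cases h1 : (1 : Fin 6) ∈ B
      · -- C4 : 0 3 1 5
        exact aux_c4_embed _ 0 3 1 5 (aux_bip_adj B (by decide) h0 h3 (aux_g_nonadj (by decide)))
          ((aux_bip_adj B (by decide) h1 h3 (aux_g_nonadj (by decide))).symm)
          (aux_bip_adj B (by decide) h1 h5 (aux_g_nonadj (by decide)))
          ((aux_bip_adj B (by decide) h0 h5 (aux_g_nonadj (by decide))).symm)
          (aux_bip_nonadj_bb B h0 h1) (aux_bip_nonadj_ww B h3 h5) (by decide) (by decide)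
      · -- C4 : 0 1 2 5
        exact aux_c4_embed _ 0 1 2 5 (aux_bip_adj B (by decide) h0 h1 (aux_g_nonadj (by decide)))
          ((aux_bip_adj B (by decide) h2 h1 (aux_g_nonadj (by decide))).symm)
          (aux_bip_adj B (by decide) h2 h5 (aux_g_nonadj (by decide)))
          ((aux_bip_adj B (by decide) h0 h5 (aux_g_nonadj (by decide))).symm)
          (aux_bip_nonadj_bb B h0 h2) (aux_bip_nonadj_ww B h1 h5) (by decide) (by decide)
      · -- C4 : 1 0 2 5
        exact aux_c4_embed _ 1 0 2 5 (aux_bip_adj B (by decide) h1 h0 (aux_g_nonadj (by decide)))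
          ((aux_bip_adj B (by decide) h2 h0 (aux_g_nonadj (by decide))).symm)
          (aux_bip_adj B (by decide) h2 h5 (aux_g_nonadj (by decide)))
          ((aux_bip_adj B (by decide) h1 h5 (aux_g_nonadj (by decide))).symm)
          (aux_bip_nonadj_bb B h1 h2) (aux_bip_nonadj_ww B h0 h5) (by decide) (by decide)
      · -- C4 : 0 2 1 4
        exact aux_c4_embed _ 0 2 1 4 ((aux_bip_adj B (by decide) h2 h0 (aux_g_nonadj (by decide))).symm)
          (aux_bip_adj B (by decide) h2 h1 (aux_g_nonadj (by decide)))
          ((aux_bip_adj B (by decide) h4 h1 (aux_g_nonadj (by decide))).symm)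
          (aux_bip_adj B (by decide) h4 h0 (aux_g_nonadj (by decide)))
          (aux_bip_nonadj_ww B h0 h1) (aux_bip_nonadj_bb B h2 h4) (by decide) (by decide)
    · have h3 : (3 : Fin 6) ∈ B := by
        by_contra hx
        exact h2 (h23.mpr hx)
      have h4 : (4 : Fin 6) ∉ B := h34.mp h3
      have h5 : (5 : Fin 6) ∈ B := by
        by_contra hx
        exact h4 (h45.mpr hx)
      by_cases h0 : (0 : Fin 6) ∈ B <;> by_cases h1 : (1 : Fin 6) ∈ B
      · -- C4 : 0 2 1 4
        exact aux_c4_embed _ 0 2 1 4 (aux_bip_adj B (by decide) h0 h2 (aux_g_nonadj (by decide)))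
          ((aux_bip_adj B (by decide) h1 h2 (aux_g_nonadj (by decide))).symm)
          (aux_bip_adj B (by decide) h1 h4 (aux_g_nonadj (by decide)))
          ((aux_bip_adj B (by decide) h0 h4 (aux_g_nonadj (by decide))).symm)
          (aux_bip_nonadj_bb B h0 h1) (aux_bip_nonadj_ww B h2 h4) (by decide) (by decide)
      · -- C4 : 0 1 5 2
        exact aux_c4_embed _ 0 1 5 2 (aux_bip_adj B (by decide) h0 h1 (aux_g_nonadj (by decide)))
          ((aux_bip_adj B (by decide) h5 h1 (aux_g_nonadj (by decide))).symm)
          (aux_bip_adj B (by decide) h5 h2 (aux_g_nonadj (by decide)))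
          ((aux_bip_adj B (by decide) h0 h2 (aux_g_nonadj (by decide))).symm)
          (aux_bip_nonadj_bb B h0 h5) (aux_bip_nonadj_ww B h1 h2) (by decide) (by decide)
      · -- C4 : 1 0 5 2
        exact aux_c4_embed _ 1 0 5 2 (aux_bip_adj B (by decide) h1 h0 (aux_g_nonadj (by decide)))
          ((aux_bip_adj B (by decide) h5 h0 (aux_g_nonadj (by decide))).symm)
          (aux_bip_adj B (by decide) h5 h2 (aux_g_nonadj (by decide)))
          ((aux_bip_adj B (by decide) h1 h2 (aux_g_nonadj (by decide))).symm)
          (aux_bip_nonadj_bb B h1 h5) (aux_bip_nonadj_ww B h0 h2) (by decide) (by decide)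
      · -- C4 : 0 3 1 5
        exact aux_c4_embed _ 0 3 1 5 ((aux_bip_adj B (by decide) h3 h0 (aux_g_nonadj (by decide))).symm)
          (aux_bip_adj B (by decide) h3 h1 (aux_g_nonadj (by decide)))
          ((aux_bip_adj B (by decide) h5 h1 (aux_g_nonadj (by decide))).symm)
          (aux_bip_adj B (by decide) h5 h0 (aux_g_nonadj (by decide)))
          (aux_bip_nonadj_ww B h0 h1) (aux_bip_nonadj_bb B h3 h5) (by decide) (by decide)
  exact ⟨hC4, aux_not_S _ hC4.some⟩
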